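/- Let n ≥ 1, let a_0, ..., a_n be nonnegative real numbers, define b_r = ∑_{s=0}^{n-r} C(n-r, s)·a_{r+s} for 0 ≤ r ≤ n, and f(i, l) = ∑_{k=0}^{n-l} C(n-l, k)·(-1)^k·b_{i+k} for 0 ≤ i ≤ l ≤ n. Then for every 0 ≤ i < j < k ≤ l ≤ n, (k-j)·f(i, l) + (i-k)·f(j, l) + (j-i)·f(k, l) ≥ 0. -/
import Mathlib

private def gS (a : ℕ → ℝ) (i l : ℕ) : ℝ :=
  ∑ s ∈ Finset.range (l - i + 1), (Nat.choose (l - i) s : ℝ) * a (i + s)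

private lemma gS_nonneg (n : ℕ) (a : ℕ → ℝ) (ha : ∀ i : ℕ, i ≤ n → 0 ≤ a i)
    (i l : ℕ) (hi : i ≤ n) (hl : l ≤ n) : 0 ≤ gS a i l := by
  apply Finset.sum_nonneg
  intro s hs
  rw [Finset.mem_range] at hs
  have : i + s ≤ n := by omega
  exact mul_nonneg (Nat.cast_nonneg _) (ha _ this)

private lemma gS_pascal (a : ℕ → ℝ) (i l : ℕ) (h : i ≤ l) :
    gS a i (l + 1) = gS a i l + gS a (i + 1) (l + 1) := by
  obtain ⟨m, rfl⟩ := Nat.exists_eq_add_of_le h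
  simp only [gS]
  have h1 : i + m + 1 - i = m + 1 := by omega
  have h2 : i + m - i = m := by omega
  have h3 : i + m + 1 - (i + 1) = m := by omega
  rw [h1, h2, h3]
  rw [Finset.sum_range_succ' (fun s => (Nat.choose (m+1) s : ℝ) * a (i + s))]
  simp only [Nat.choose_succ_succ', Nat.cast_add, add_mul]
  rw [Finset.sum_add_distrib]
  have e1 : ∑ s ∈ Finset.range (m+1), (Nat.choose m s : ℝ) * a (i + (s+1))
      = ∑ s ∈ Finset.range (m+1), (Nat.choose m s : ℝ) * a (i + 1 + s) := by
    apply Finset.sum_congr rfl; intro s _; ring_nf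
  have e2 : ∑ s ∈ Finset.range (m+1), (Nat.choose m (s+1) : ℝ) * a (i + (s+1))
      + (Nat.choose (m+1) 0 : ℝ) * a (i + 0)
      = ∑ s ∈ Finset.range (m+1), (Nat.choose m s : ℝ) * a (i + s) := by
    rw [Finset.sum_range_succ' (fun s => (Nat.choose m s : ℝ) * a (i + s))]
    rw [Finset.sum_range_succ (fun s => (Nat.choose m (s+1) : ℝ) * a (i + (s+1)))]
    simp [Nat.choose_succ_self]
  rw [e1]
  linarith [e2]

private lemma f_pascal (n : ℕ) (b : ℕ → ℝ) (f : ℕ → ℕ → ℝ)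
    (hf : ∀ i l : ℕ, i ≤ l → l ≤ n →
      f i l = ∑ k ∈ Finset.range (n - l + 1),
        (Nat.choose (n - l) k : ℝ) * (-1 : ℝ) ^ k * b (i + k))
    (i l : ℕ) (hil : i ≤ l) (hln : l < n) :
    f i l = f i (l + 1) - f (i + 1) (l + 1) := by
  set m := n - (l + 1) with hm
  have h1 : n - l = m + 1 := by omega
  rw [hf i l hil (le_of_lt hln), hf i (l+1) (by omega) (by omega),
      hf (i+1) (l+1) (by omega) (by omega), h1, ← hm]
  rw [Finset.sum_range_succ' (fun k => (Nat.choose (m+1) k : ℝ) * (-1:ℝ)^k * b (i + k))]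
  simp only [Nat.choose_succ_succ', Nat.cast_add, add_mul, pow_succ, pow_zero,
    Nat.choose_zero_right, Nat.cast_one, one_mul, mul_neg, mul_one, neg_mul, neg_add]
  rw [Finset.sum_add_distrib]
  have e1 : ∑ k ∈ Finset.range (m+1), -((Nat.choose m k : ℝ) * (-1:ℝ)^k * b (i + (k+1)))
      = -∑ k ∈ Finset.range (m+1), (Nat.choose m k : ℝ) * (-1:ℝ)^k * b (i + 1 + k) := by
    rw [← Finset.sum_neg_distrib]
    apply Finset.sum_congr rfl; intro s _
    have : i + (s + 1) = i + 1 + s := by omega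
    rw [this]
  have e2 : ∑ k ∈ Finset.range (m+1), -((Nat.choose m (k+1) : ℝ) * (-1:ℝ)^k * b (i + (k+1)))
      + b (i + 0)
      = ∑ k ∈ Finset.range (m+1), (Nat.choose m k : ℝ) * (-1:ℝ)^k * b (i + k) := by
    rw [Finset.sum_range_succ' (fun k => (Nat.choose m k : ℝ) * (-1:ℝ)^k * b (i + k))]
    rw [Finset.sum_range_succ (fun k => -((Nat.choose m (k+1) : ℝ) * (-1:ℝ)^k * b (i + (k+1))))]
    simp only [Nat.choose_succ_self, Nat.cast_zero, zero_mul, mul_zero, neg_zero, add_zero,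
      pow_succ, Nat.choose_zero_right, Nat.cast_one, one_mul, pow_zero]
    congr 1; apply Finset.sum_congr rfl; intro x _; ring
  rw [e1]
  linarith [e2]

private lemma f_eq_gS (n : ℕ) (a : ℕ → ℝ) (b : ℕ → ℝ)
    (hb : ∀ r : ℕ, r ≤ n →
      b r = ∑ s ∈ Finset.range (n - r + 1), (Nat.choose (n - r) s : ℝ) * a (r + s))
    (f : ℕ → ℕ → ℝ)
    (hf : ∀ i l : ℕ, i ≤ l → l ≤ n →
      f i l = ∑ k ∈ Finset.range (n - l + 1),
        (Nat.choose (n - l) k : ℝ) * (-1 : ℝ) ^ k * b (i + k)) :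
    ∀ d l i : ℕ, n - l = d → i ≤ l → l ≤ n → f i l = gS a i l := by
  intro d
  induction d with
  | zero =>
    intro l i hd hil hln
    rw [hf i l hil hln, hd]
    simp only [zero_add, Finset.sum_range_one, Nat.choose_self, Nat.cast_one, pow_zero,
      one_mul, mul_one, add_zero, Nat.choose_zero_right]
    rw [hb i (le_trans hil hln)]
    have h2 : n - i = l - i := by omega
    rw [h2]
    simp [gS]
  | succ d ih =>
    intro l i hd hil hln
    have hln' : l < n := by omega
    rw [f_pascal n b f hf i l hil hln']
    rw [ih (l+1) i (by omega) (by omega) (by omega),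
        ih (l+1) (i+1) (by omega) (by omega) (by omega)]
    rw [gS_pascal a i l hil]
    ring

theorem formal_derivative_reverse_ineq (n : ℕ) (hn : 1 ≤ n) (a : ℕ → ℝ)
    (ha : ∀ i : ℕ, i ≤ n → 0 ≤ a i)
    (b : ℕ → ℝ)
    (hb : ∀ r : ℕ, r ≤ n →
      b r = ∑ s ∈ Finset.range (n - r + 1), (Nat.choose (n - r) s : ℝ) * a (r + s))
    (f : ℕ → ℕ → ℝ)
    (hf : ∀ i l : ℕ, i ≤ l → l ≤ n →
      f i l = ∑ k ∈ Finset.range (n - l + 1),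
        (Nat.choose (n - l) k : ℝ) * (-1 : ℝ) ^ k * b (i + k)) :
    ∀ i j k l : ℕ, i < j → j < k → k ≤ l → l ≤ n →
      ((k : ℝ) - j) * f i l + ((i : ℝ) - k) * f j l + ((j : ℝ) - i) * f k l ≥ 0 := by
  intro i j k l hij hjk hkl hln
  have hl2 : 2 ≤ l := by omega
  have hfg : ∀ t : ℕ, t ≤ l → f t l = gS a t l :=
    fun t ht => f_eq_gS n a b hb f hf (n - l) l t rfl ht hln
  -- difference identity
  have hstep : ∀ t : ℕ, t < l → f t l - f (t+1) l = gS a t (l-1) := by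
    intro t ht
    rw [hfg t (by omega), hfg (t+1) (by omega)]
    have h := gS_pascal a t (l-1) (by omega)
    have : l - 1 + 1 = l := by omega
    rw [this] at h
    linarith
  -- monotonicity of differences
  have hmono1 : ∀ t : ℕ, t + 1 < l → gS a (t+1) (l-1) ≤ gS a t (l-1) := by
    intro t ht
    have h := gS_pascal a t (l-2) (by omega)
    have h2 : l - 2 + 1 = l - 1 := by omega
    rw [h2] at h
    have := gS_nonneg n a ha t (l-2) (by omega) (by omega)
    linarith
  have hmono : ∀ t t' : ℕ, t ≤ t' → t' < l → gS a t' (l-1) ≤ gS a t (l-1) := by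
    intro t t' htt' ht'
    induction t' with
    | zero =>
      have ht0 : t = 0 := by omega
      rw [ht0]
    | succ s ihs =>
      rcases Nat.lt_or_ge t (s+1) with h | h
      · exact le_trans (hmono1 s ht') (ihs (by omega) (by omega))
      · have : t = s + 1 := by omega
        simp [this]
  -- lower bound: f i l - f j l ≥ (j - i) * D j
  have boundA : ∀ j' : ℕ, i ≤ j' → j' < l →
      ((j' : ℝ) - i) * gS a j' (l-1) ≤ f i l - f j' l := by
    intro j' hij' hj'l
    induction j' with
    | zero =>
      have : i = 0 := by omega
      simp [this]
    | succ s ihs =>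
      rcases Nat.lt_or_ge i (s+1) with h | h
      · have hs : i ≤ s := by omega
        have hsl : s < l := by omega
        have ih := ihs hs hsl
        have hd := hstep s hsl
        have hm := hmono s (s+1) (by omega) hj'l
        have hc : (0:ℝ) ≤ (s:ℝ) + 1 - i := by
          have : (i:ℝ) ≤ s := by exact_mod_cast hs
          linarith
        have : ((s:ℝ) + 1 - i) * gS a (s+1) (l-1) ≤ ((s:ℝ) + 1 - i) * gS a s (l-1) :=
          mul_le_mul_of_nonneg_left hm hc
        push_cast
        nlinarith [ih, hd]
      · have : i = s + 1 := by omega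
        simp [this]
  -- upper bound: f j l - f k l ≤ (k - j) * D j
  have boundB : ∀ k' : ℕ, j ≤ k' → k' ≤ l →
      f j l - f k' l ≤ ((k' : ℝ) - j) * gS a j (l-1) := by
    intro k' hjk' hk'l
    induction k' with
    | zero =>
      have : j = 0 := by omega
      simp [this]
    | succ s ihs =>
      rcases Nat.lt_or_ge j (s+1) with h | h
      · have hs : j ≤ s := by omega
        have hsl : s < l := by omega
        have ih := ihs hs (by omega)
        have hd := hstep s hsl
        have hm := hmono j s hs hsl
        push_cast
        nlinarith [ih, hd]
      · have : j = s + 1 := by omega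
        simp [this]
  have hA := boundA j (by omega) (by omega)
  have hB := boundB k (by omega) hkl
  have hkj : (0:ℝ) < (k:ℝ) - j := by
    have : (j:ℝ) < k := by exact_mod_cast hjk
    linarith
  have hji : (0:ℝ) < (j:ℝ) - i := by
    have : (i:ℝ) < j := by exact_mod_cast hij
    linarith
  nlinarith [mul_le_mul_of_nonneg_left hA (le_of_lt hkj),
    mul_le_mul_of_nonneg_left hB (le_of_lt hji)]
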